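/- Let $x_1 < \dots < x_n$ with $x_1 \geq 0$, probabilities $q_k \in (0,1)$ summing to 1, $\lambda > 0$, and let $x^*$ be the unique solution in $(x_n - \lambda, x_n)$ of $x^* = \lambda \sum_k \frac{q_k x_k}{\lambda + x^* - x_k}$. Define $p_k = \frac{\lambda q_k}{\lambda + x^* - x_k}$ for each $k$. Then $p_k > 0$ for all $k$, $\sum_{k=1}^n p_k = 1$, and $\sum_{k=1}^n p_k x_k = x^*$. -/

import Mathlib

/-- The steady-state distribution `p` is a probability distribution with mean `x*`. -/
theorem stmt_7 (n : ℕ) (hn : 2 ≤ n) (x q : Fin n → ℝ)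
    (hx : StrictMono x) (hx0 : 0 ≤ x ⟨0, by omega⟩)
    (hq : ∀ k, q k ∈ Set.Ioo (0 : ℝ) 1) (hqsum : ∑ k, q k = 1)
    (lam : ℝ) (hlam : 0 < lam) (xs : ℝ)
    (hmem : xs ∈ Set.Ioo (x ⟨n - 1, by omega⟩ - lam) (x ⟨n - 1, by omega⟩))
    (heq : xs = lam * ∑ k, q k * x k / (lam + xs - x k))
    (p : Fin n → ℝ) (hp : ∀ k, p k = lam * q k / (lam + xs - x k)) :
    (∀ k, 0 < p k) ∧ ∑ k, p k = 1 ∧ ∑ k, p k * x k = xs := by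
  have hd : ∀ k, 0 < lam + xs - x k := by
    intro k
    have hk : x k ≤ x ⟨n - 1, by omega⟩ := by
      apply hx.monotone
      have := k.2
      exact Fin.le_def.mpr (by simp; omega)
    linarith [hmem.1]
  have hpos : ∀ k, 0 < p k := by
    intro k
    rw [hp k]
    exact div_pos (mul_pos hlam (hq k).1) (hd k)
  have hmean : ∑ k, p k * x k = xs := by
    rw [heq, Finset.mul_sum]
    apply Finset.sum_congr rfl
    intro k _
    rw [hp k]
    field_simp
  have hkey : ∑ k, p k * (lam + xs - x k) = lam := by
    have : ∀ k ∈ Finset.univ, p k * (lam + xs - x k) = lam * q k := by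
      intro k _
      rw [hp k, div_mul_cancel₀ _ (hd k).ne']
    rw [Finset.sum_congr rfl this, ← Finset.mul_sum, hqsum, mul_one]
  have hsum : ∑ k, p k = 1 := by
    have hexp : ∑ k, p k * (lam + xs - x k)
        = (lam + xs) * ∑ k, p k - ∑ k, p k * x k := by
      rw [Finset.mul_sum, ← Finset.sum_sub_distrib]
      apply Finset.sum_congr rfl
      intro k _; ring
    have hls : 0 < lam + xs := by
      have hk : 0 ≤ x ⟨n - 1, by omega⟩ := le_trans hx0 (hx.monotone (by
        exact Fin.mk_le_mk.mpr (by omega)))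
      linarith [hmem.1]
    have : (lam + xs) * ∑ k, p k = lam + xs := by
      rw [hexp, hmean] at hkey; linarith
    exact mul_left_cancel₀ (ne_of_gt hls) (by rw [this, mul_one])
  exact ⟨hpos, hsum, hmean⟩
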